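/- Let J be the M×M Jordan block (M ≥ 2) with eigenvalue λ. The numerical range W(J) is the closed disk { z ∈ ℂ : |z − λ| ≤ cos(π/(M+1)) }. -/

import Mathlib

open scoped Matrix
open Complex Real

/-- The numerical range of a square complex matrix. -/
def numRange {N : ℕ} (M : Matrix (Fin N) (Fin N) ℂ) : Set ℂ :=
  {z | ∃ x : EuclideanSpace ℂ (Fin N), ‖x‖ = 1 ∧ star (x : Fin N → ℂ) ⬝ᵥ M.mulVec x = z}

/-- The numerical abscissa of a square complex matrix. -/
noncomputable def numAbs {N : ℕ} (M : Matrix (Fin N) (Fin N) ℂ) : ℝ :=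
  sSup {r : ℝ | ∃ x : EuclideanSpace ℂ (Fin N), ‖x‖ = 1 ∧ (star (x : Fin N → ℂ) ⬝ᵥ M.mulVec x).re = r}

/-- The spectral (operator 2-)norm of a square complex matrix. -/
noncomputable def spec2 {N : ℕ} (M : Matrix (Fin N) (Fin N) ℂ) : ℝ :=
  ‖Matrix.toEuclideanCLM (𝕜 := ℂ) M‖

/-- The squared Frobenius norm of a square complex matrix. -/
noncomputable def frobSq {N : ℕ} (M : Matrix (Fin N) (Fin N) ℂ) : ℝ :=
  ∑ i, ∑ j, ‖M i j‖ ^ 2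

/-- The M×M Jordan block with eigenvalue λ. -/
def jordanBlock (M : ℕ) (lam : ℂ) : Matrix (Fin M) (Fin M) ℂ :=
  Matrix.of fun i j => if i = j then lam else if (i : ℕ) + 1 = (j : ℕ) then 1 else 0

section JBAux
open Finset

section Aux
variable (M : ℕ)

noncomputable def sg (M : ℕ) (k : ℕ) : ℝ := Real.sin (k * (π/(M+1)))

lemma sg_rec (k : ℕ) : sg M k + sg M (k+2) = 2 * Real.cos (π/(M+1)) * sg M (k+1) := by
  unfold sg
  push_cast
  have e1 : (k:ℝ) * (π/(M+1)) = ((k:ℝ)+1) * (π/(M+1)) - (π/(M+1)) := by ring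
  have e2 : ((k:ℝ)+2) * (π/(M+1)) = ((k:ℝ)+1) * (π/(M+1)) + (π/(M+1)) := by ring
  rw [e1, e2, Real.sin_sub, Real.sin_add]
  ring

lemma sg_zero : sg M 0 = 0 := by simp [sg]

lemma sg_top : sg M (M+1) = 0 := by
  unfold sg
  push_cast
  rw [mul_div_cancel₀ _ (by positivity)]
  exact Real.sin_pi

lemma sg_pos {k : ℕ} (h1 : 1 ≤ k) (h2 : k ≤ M) : 0 < sg M k := by
  unfold sg
  apply Real.sin_pos_of_pos_of_lt_pi
  · have hp : (0:ℝ) < π/(M+1) := by positivity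
    have : (1:ℝ) ≤ k := by exact_mod_cast h1
    nlinarith
  · have hp : (0:ℝ) < π/(M+1) := by positivity
    have hk : (k:ℝ) ≤ M := by exact_mod_cast h2
    have h : (k:ℝ) * (π/(M+1)) < ((M:ℝ)+1) * (π/(M+1)) := by nlinarith
    calc (k:ℝ) * (π/(M+1)) < ((M:ℝ)+1) * (π/(M+1)) := h
    _ = π := by rw [mul_div_cancel₀ _ (by positivity)]

lemma amgm (a b s t : ℝ) (hs : 0 < s) (ht : 0 < t) :
    a * b ≤ (t/s * a^2 + s/t * b^2)/2 := by
  have h3 : (t/s * a^2 + s/t * b^2)/2 = (t^2*a^2 + s^2*b^2)/(2*(s*t)) := by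
    field_simp
  rw [h3, le_div_iff₀ (by positivity)]
  nlinarith [sq_nonneg (t*a - s*b)]

lemma key_ineq (hM : 2 ≤ M) (a : ℕ → ℝ) :
    ∑ k ∈ range (M-1), a k * a (k+1) ≤
      Real.cos (π/(M+1)) * ∑ k ∈ range M, a k ^ 2 := by
  obtain ⟨N, rfl⟩ : ∃ N, M = N+1 := ⟨M-1, by omega⟩
  simp only [Nat.add_sub_cancel]
  have hpos : ∀ k < N+1, 0 < sg (N+1) (k+1) := by
    intro k hk
    exact sg_pos (N+1) (k := k+1) (by omega) (by omega)
  have step : ∀ k ∈ range N, a k * a (k+1) ≤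
      (sg (N+1) (k+2)/sg (N+1) (k+1) * a k ^2 + sg (N+1) (k+1)/sg (N+1) (k+2) * a (k+1) ^2)/2 := by
    intro k hk
    rw [mem_range] at hk
    exact amgm _ _ _ _ (hpos k (by omega)) (hpos (k+1) (by omega))
  calc ∑ k ∈ range N, a k * a (k+1)
      ≤ ∑ k ∈ range N, (sg (N+1) (k+2)/sg (N+1) (k+1) * a k ^2 + sg (N+1) (k+1)/sg (N+1) (k+2) * a (k+1) ^2)/2 :=
        Finset.sum_le_sum step
    _ = ((∑ k ∈ range N, sg (N+1) (k+2)/sg (N+1) (k+1) * a k ^2)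
        + ∑ k ∈ range N, sg (N+1) (k+1)/sg (N+1) (k+2) * a (k+1) ^2)/2 := by
        rw [← Finset.sum_add_distrib, ← Finset.sum_div]
    _ = ((∑ k ∈ range (N+1), sg (N+1) (k+2)/sg (N+1) (k+1) * a k ^2)
        + ∑ k ∈ range (N+1), sg (N+1) k/sg (N+1) (k+1) * a k ^2)/2 := by
        congr 1
        congr 1
        · rw [Finset.sum_range_succ, show N+2 = (N+1)+1 from rfl, sg_top]
          simp
        · rw [Finset.sum_range_succ' (fun k => sg (N+1) k/sg (N+1) (k+1) * a k ^2) N, sg_zero]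
          simp
    _ = ∑ k ∈ range (N+1), ((sg (N+1) (k+2) + sg (N+1) k)/sg (N+1) (k+1)) * a k ^2 / 2 := by
        rw [← Finset.sum_add_distrib, Finset.sum_div]
        apply Finset.sum_congr rfl
        intro k _
        ring
    _ = ∑ k ∈ range (N+1), Real.cos (π/(N+1+1)) * a k ^2 := by
        apply Finset.sum_congr rfl
        intro k hk
        rw [mem_range] at hk
        have h := sg_rec (N+1) k
        have hne : sg (N+1) (k+1) ≠ 0 := ne_of_gt (hpos k hk)
        rw [show sg (N+1) (k+2) + sg (N+1) k = 2 * Real.cos (π/(N+1+1)) * sg (N+1) (k+1) by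
          push_cast at h ⊢; linarith]
        field_simp
    _ = Real.cos (π/(N+1+1)) * ∑ k ∈ range (N+1), a k ^ 2 := by rw [Finset.mul_sum]
    _ = Real.cos (π/((N+1:ℕ)+1)) * ∑ k ∈ range (N+1), a k ^ 2 := by push_cast; ring_nf

lemma key_eq (hM : 2 ≤ M) :
    ∑ k ∈ range (M-1), sg M (k+1) * sg M (k+2) =
      Real.cos (π/(M+1)) * ∑ k ∈ range M, sg M (k+1) ^ 2 := by
  obtain ⟨N, rfl⟩ : ∃ N, M = N+1 := ⟨M-1, by omega⟩
  simp only [Nat.add_sub_cancel]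
  have h1 : 2 * (Real.cos (π/(N+1+1)) * ∑ k ∈ range (N+1), sg (N+1) (k+1) ^ 2)
      = ∑ k ∈ range (N+1), sg (N+1) (k+1) * (sg (N+1) k + sg (N+1) (k+2)) := by
    rw [Finset.mul_sum, Finset.mul_sum]
    apply Finset.sum_congr rfl
    intro k _
    have h := sg_rec (N+1) k
    push_cast at h ⊢
    linear_combination (-(sg (N+1) (k+1))) * h
  have h2 : ∑ k ∈ range (N+1), sg (N+1) (k+1) * sg (N+1) k
      = ∑ k ∈ range N, sg (N+1) (k+1) * sg (N+1) (k+2) := by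
    rw [Finset.sum_range_succ' (fun k => sg (N+1) (k+1) * sg (N+1) k) N, sg_zero]
    simp [mul_comm]
  have h3 : ∑ k ∈ range (N+1), sg (N+1) (k+1) * sg (N+1) (k+2)
      = ∑ k ∈ range N, sg (N+1) (k+1) * sg (N+1) (k+2) := by
    rw [Finset.sum_range_succ, show N+2 = (N+1)+1 from rfl, sg_top]
    simp
  have h4 : 2 * (Real.cos (π/(N+1+1)) * ∑ k ∈ range (N+1), sg (N+1) (k+1) ^ 2)
      = 2 * ∑ k ∈ range N, sg (N+1) (k+1) * sg (N+1) (k+2) := by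
    rw [h1]
    simp_rw [mul_add]
    rw [Finset.sum_add_distrib, h2, h3]
    ring
  push_cast at h4 ⊢
  linarith

end Aux



lemma jb_mulVec (M : ℕ) (lam : ℂ) (x : Fin M → ℂ) (i : Fin M) :
    (jordanBlock M lam).mulVec x i
      = lam * x i + (if h : (i:ℕ)+1 < M then x ⟨(i:ℕ)+1, h⟩ else 0) := by
  unfold jordanBlock Matrix.mulVec dotProduct
  simp only [Matrix.of_apply]
  have : ∀ j : Fin M, (if i = j then lam else if (i:ℕ)+1 = (j:ℕ) then 1 else 0) * x j
      = (if j = i then lam * x i else 0) + (if (j:ℕ) = (i:ℕ)+1 then x j else 0) := by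
    intro j
    by_cases h1 : i = j
    · subst h1
      simp [Fin.ext_iff]
    · have h1' : ¬ (j = i) := fun h => h1 h.symm
      simp only [h1, if_neg h1', if_false, zero_add]
      by_cases h2 : (i:ℕ)+1 = (j:ℕ)
      · rw [if_pos h2, if_pos h2.symm, one_mul]
      · rw [if_neg h2, if_neg (fun h => h2 h.symm), zero_mul]
  rw [Finset.sum_congr rfl (fun j _ => this j), Finset.sum_add_distrib]
  congr 1
  · simp
  · by_cases h : (i:ℕ)+1 < M
    · rw [dif_pos h]
      rw [Finset.sum_eq_single (⟨(i:ℕ)+1, h⟩ : Fin M)]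
      · simp
      · intro j _ hj
        rw [if_neg]
        simp only [ne_eq, Fin.ext_iff] at hj
        exact hj
      · simp
    · rw [dif_neg h]
      apply Finset.sum_eq_zero
      intro j _
      rw [if_neg]
      intro hj
      exact h (hj ▸ j.isLt)

def xe (M : ℕ) (x : Fin M → ℂ) (k : ℕ) : ℂ := if h : k < M then x ⟨k, h⟩ else 0

lemma xe_coe (M : ℕ) (x : Fin M → ℂ) (i : Fin M) : xe M x i = x i := by
  simp [xe, i.isLt]

lemma qform (M : ℕ) (hM : 2 ≤ M) (lam : ℂ) (x : Fin M → ℂ) :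
    star x ⬝ᵥ (jordanBlock M lam).mulVec x
      = lam * ((∑ k ∈ range M, ‖(xe M x k)‖ ^ 2 : ℝ) : ℂ)
        + ∑ k ∈ range (M-1), (starRingEnd ℂ) (xe M x k) * xe M x (k+1) := by
  have hb : ∀ i : Fin M, (jordanBlock M lam).mulVec x i
      = lam * xe M x i + xe M x ((i:ℕ)+1) := by
    intro i
    rw [jb_mulVec, xe_coe]
    rfl
  unfold dotProduct
  simp only [Pi.star_apply, hb]
  have expand : ∀ i : Fin M, star (x i) * (lam * xe M x i + xe M x ((i:ℕ)+1))
      = lam * ((‖(xe M x i)‖ ^ 2 : ℝ) : ℂ)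
        + (starRingEnd ℂ) (xe M x i) * xe M x ((i:ℕ)+1) := by
    intro i
    rw [xe_coe]
    have : (starRingEnd ℂ) (x i) * x i = ((‖(x i)‖ ^ 2 : ℝ) : ℂ) := by
      rw [← Complex.normSq_eq_norm_sq, ← Complex.normSq_eq_conj_mul_self]
    calc star (x i) * (lam * x i + xe M x ((i:ℕ)+1))
        = lam * ((starRingEnd ℂ) (x i) * x i) + (starRingEnd ℂ) (x i) * xe M x ((i:ℕ)+1) := by
          rw [RCLike.star_def]
          ring
      _ = _ := by rw [this]
  rw [Finset.sum_congr rfl (fun i _ => expand i), Finset.sum_add_distrib]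
  congr 1
  · rw [← Finset.mul_sum]
    congr 1
    rw [Fin.sum_univ_eq_sum_range (fun k => ((‖(xe M x k)‖ ^ 2 : ℝ) : ℂ))]
    push_cast
    rfl
  · rw [Fin.sum_univ_eq_sum_range (fun k => (starRingEnd ℂ) (xe M x k) * xe M x (k+1))]
    obtain ⟨N, rfl⟩ : ∃ N, M = N+1 := ⟨M-1, by omega⟩
    rw [Finset.sum_range_succ]
    simp only [Nat.add_sub_cancel]
    have : xe (N+1) x (N+1) = 0 := by simp [xe]
    rw [this, mul_zero, add_zero]

lemma sum_sq_eq (M : ℕ) (x : EuclideanSpace ℂ (Fin M)) :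
    ∑ k ∈ range M, ‖(xe M x k)‖ ^ 2 = ‖x‖ ^ 2 := by
  rw [EuclideanSpace.norm_eq, Real.sq_sqrt (by positivity),
    ← Fin.sum_univ_eq_sum_range (fun k => ‖(xe M x k)‖ ^ 2)]
  apply Finset.sum_congr rfl
  intro i _
  rw [xe_coe]


lemma subset_dir (M : ℕ) (hM : 2 ≤ M) (lam : ℂ)
    (hineq : ∀ a : ℕ → ℝ, ∑ k ∈ range (M-1), a k * a (k+1) ≤
      Real.cos (π/(M+1)) * ∑ k ∈ range M, a k ^ 2) :
    numRange (jordanBlock M lam) ⊆ Metric.closedBall lam (Real.cos (π/(M+1))) := by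
  rintro z ⟨x, hx, hz⟩
  rw [qform M hM lam x] at hz
  have hsum : ∑ k ∈ range M, ‖(xe M x k)‖ ^ 2 = 1 := by
    rw [sum_sq_eq M x, hx, one_pow]
  rw [hsum] at hz
  rw [Metric.mem_closedBall, dist_comm, Complex.dist_eq]
  have : lam - z = -(∑ k ∈ range (M-1), (starRingEnd ℂ) (xe M x k) * xe M x (k+1)) := by
    rw [← hz]; push_cast; ring
  rw [this, norm_neg]
  calc ‖(∑ k ∈ range (M-1), (starRingEnd ℂ) (xe M x k) * xe M x (k+1))‖
      ≤ ∑ k ∈ range (M-1), ‖((starRingEnd ℂ) (xe M x k) * xe M x (k+1))‖ := by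
        exact norm_sum_le _ _
    _ = ∑ k ∈ range (M-1), ‖(xe M x k)‖ * ‖(xe M x (k+1))‖ := by
        apply Finset.sum_congr rfl
        intro k _
        rw [norm_mul, Complex.norm_conj]
    _ ≤ Real.cos (π/(M+1)) * ∑ k ∈ range M, ‖(xe M x k)‖ ^ 2 :=
        hineq (fun k => ‖(xe M x k)‖)
    _ = Real.cos (π/(M+1)) := by rw [hsum, mul_one]

noncomputable def uu (M : ℕ) (t : ℝ) (k : ℕ) : ℝ :=
  (1-t) * (if k = 0 then 1 else 0) + t * (if k < M then sg M (k+1) else 0)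

lemma uu_cont (M : ℕ) (k : ℕ) : Continuous (fun t => uu M t k) := by
  unfold uu
  fun_prop

lemma exists_v (M : ℕ) (hM : 2 ≤ M) (w : ℝ) (hw0 : 0 ≤ w) (hw1 : w ≤ Real.cos (π/(M+1))) :
    ∃ v : ℕ → ℝ, (∑ k ∈ range M, (v k)^2 = 1) ∧
      (∑ k ∈ range (M-1), v k * v (k+1) = w) := by
  have hs1 : 0 < sg M 1 := sg_pos M le_rfl (by omega)
  set f : ℝ → ℝ := fun t =>
    (∑ k ∈ range (M-1), uu M t k * uu M t (k+1)) / (∑ k ∈ range M, (uu M t k)^2) with hf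
  have hu0 : ∀ t ∈ Set.Icc (0:ℝ) 1, 0 < uu M t 0 := by
    intro t ht
    obtain ⟨h0, h1⟩ := ht
    unfold uu
    rw [if_pos rfl, if_pos (by omega)]
    have hss : sg M (0+1) = sg M 1 := rfl
    rw [hss]
    rcases eq_or_lt_of_le h1 with rfl|hlt
    · simpa using hs1
    · nlinarith [mul_nonneg h0 hs1.le]
  have hN : ∀ t ∈ Set.Icc (0:ℝ) 1, 0 < ∑ k ∈ range M, (uu M t k)^2 := by
    intro t ht
    have h1 : (uu M t 0)^2 ≤ ∑ k ∈ range M, (uu M t k)^2 := by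
      apply Finset.single_le_sum (f := fun k => (uu M t k)^2)
      · intro k _; positivity
      · rw [mem_range]; omega
    nlinarith [hu0 t ht]
  have hcont : ContinuousOn f (Set.Icc 0 1) := by
    apply ContinuousOn.div
    · exact (continuous_finset_sum _ (fun k _ => (uu_cont M k).mul (uu_cont M (k+1)))).continuousOn
    · exact (continuous_finset_sum _ (fun k _ => (uu_cont M k).pow 2)).continuousOn
    · intro t ht
      exact ne_of_gt (hN t ht)
  have hf0 : f 0 = 0 := by
    rw [hf]
    simp only
    have : ∀ k ∈ range (M-1), uu M 0 k * uu M 0 (k+1) = 0 := by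
      intro k _
      have : uu M 0 (k+1) = 0 := by unfold uu; simp
      rw [this, mul_zero]
    rw [Finset.sum_congr rfl this]
    simp
  have hf1 : f 1 = Real.cos (π/(M+1)) := by
    rw [hf]
    simp only
    have e1 : ∀ k ∈ range (M-1), uu M 1 k * uu M 1 (k+1) = sg M (k+1) * sg M (k+2) := by
      intro k hk
      rw [mem_range] at hk
      unfold uu
      have h1 : k < M := by omega
      have h2 : k+1 < M := by omega
      simp [h1, h2]
    have e2 : ∀ k ∈ range M, (uu M 1 k)^2 = sg M (k+1)^2 := by
      intro k hk
      rw [mem_range] at hk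
      unfold uu
      simp [hk]
    rw [Finset.sum_congr rfl e1, Finset.sum_congr rfl e2, key_eq M hM]
    rw [mul_div_assoc, div_self, mul_one]
    have := hN 1 (by constructor <;> norm_num)
    rw [Finset.sum_congr rfl e2] at this
    exact ne_of_gt this
  have hsub := intermediate_value_Icc (by norm_num : (0:ℝ) ≤ 1) hcont
  rw [hf0, hf1] at hsub
  obtain ⟨t0, ht0, hft0⟩ := hsub ⟨hw0, hw1⟩
  set Nt := ∑ k ∈ range M, (uu M t0 k)^2 with hNt
  have hNpos : 0 < Nt := hN t0 ht0
  refine ⟨fun k => uu M t0 k / Real.sqrt Nt, ?_, ?_⟩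
  · have : ∀ k, (uu M t0 k / Real.sqrt Nt)^2 = (uu M t0 k)^2 / Nt := by
      intro k
      rw [div_pow, Real.sq_sqrt (le_of_lt hNpos)]
    simp_rw [this]
    rw [← Finset.sum_div, ← hNt, div_self (ne_of_gt hNpos)]
  · have : ∀ k, (uu M t0 k / Real.sqrt Nt) * (uu M t0 (k+1) / Real.sqrt Nt)
        = uu M t0 k * uu M t0 (k+1) / Nt := by
      intro k
      rw [div_mul_div_comm, Real.mul_self_sqrt (le_of_lt hNpos)]
    simp_rw [this]
    rw [← Finset.sum_div]
    exact hft0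

lemma supset_dir (M : ℕ) (hM : 2 ≤ M) (lam : ℂ) :
    Metric.closedBall lam (Real.cos (π/(M+1))) ⊆ numRange (jordanBlock M lam) := by
  intro z hz
  rw [Metric.mem_closedBall, Complex.dist_eq] at hz
  set w := z - lam with hwdef
  obtain ⟨v, hv1, hv2⟩ := exists_v M hM (‖w‖) (norm_nonneg _) hz
  set e : ℂ := if w = 0 then 1 else w / ((‖w‖ : ℝ) : ℂ) with hedef
  have habse : ‖e‖ = 1 := by
    rw [hedef]
    by_cases h : w = 0
    · simp [h]
    · rw [if_neg h, norm_div, Complex.norm_real, norm_norm,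
        div_self (by simpa using h)]
  have he : (starRingEnd ℂ) e * e = 1 := by
    rw [mul_comm, Complex.mul_conj, Complex.normSq_eq_norm_sq, habse]
    norm_num
  have hew : e * ((‖w‖ : ℝ) : ℂ) = w := by
    rw [hedef]
    by_cases h : w = 0
    · simp [h]
    · rw [if_neg h, div_mul_cancel₀]
      simpa using h
  set x : EuclideanSpace ℂ (Fin M) := WithLp.toLp 2 (fun i : Fin M => e^(i:ℕ) * ((v (i:ℕ) : ℝ) : ℂ)) with hxdef
  have hxe : ∀ k, k < M → xe M x k = e^k * ((v k : ℝ) : ℂ) := by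
    intro k hk
    unfold xe
    rw [dif_pos hk]
  have habs : ∀ k ∈ range M, ‖(xe M x k)‖ ^ 2 = (v k)^2 := by
    intro k hk
    rw [mem_range] at hk
    rw [hxe k hk, norm_mul, norm_pow, habse, one_pow, one_mul, Complex.norm_real, Real.norm_eq_abs, _root_.sq_abs]
  have hsum : ∑ k ∈ range M, ‖(xe M x k)‖ ^ 2 = 1 := by
    rw [Finset.sum_congr rfl habs, hv1]
  have hx : ‖x‖ = 1 := by
    have h2 := sum_sq_eq M x
    rw [hsum] at h2
    nlinarith [norm_nonneg x]
  refine ⟨x, hx, ?_⟩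
  rw [qform M hM lam x, hsum]
  have hterm : ∀ k ∈ range (M-1), (starRingEnd ℂ) (xe M x k) * xe M x (k+1)
      = e * (((v k * v (k+1) : ℝ)) : ℂ) := by
    intro k hk
    rw [mem_range] at hk
    rw [hxe k (by omega), hxe (k+1) (by omega)]
    rw [map_mul, map_pow, Complex.conj_ofReal]
    have : ((starRingEnd ℂ) e)^k * ((v k : ℝ) : ℂ) * (e^(k+1) * ((v (k+1) : ℝ) : ℂ))
        = ((starRingEnd ℂ) e * e)^k * e * (((v k * v (k+1) : ℝ)) : ℂ) := by
      push_cast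
      ring
    rw [this, he, one_pow, one_mul]
  rw [Finset.sum_congr rfl hterm, ← Finset.mul_sum]
  have : ∑ k ∈ range (M-1), (((v k * v (k+1) : ℝ)) : ℂ) = ((‖w‖ : ℝ) : ℂ) := by
    rw [← Complex.ofReal_sum]
    exact_mod_cast congrArg (fun r : ℝ => (r : ℂ)) hv2
  rw [this, hew]
  push_cast
  rw [hwdef]
  ring

end JBAux

/-- The numerical range of the M×M Jordan block (M ≥ 2) with eigenvalue λ is the
closed disk of radius cos(π/(M+1)) centered at λ. -/
theorem stmt17 (M : ℕ) (hM : 2 ≤ M) (lam : ℂ) :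
    numRange (jordanBlock M lam) = Metric.closedBall lam (Real.cos (Real.pi / (M + 1))) := by
  apply Set.Subset.antisymm
  · exact subset_dir M hM lam (key_ineq M hM)
  · exact supset_dir M hM lam
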